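/- No nonzero harmonic homogeneous polynomial of degree m in the Plücker variables lies in the ideal generated by Q restricted to degree m, i.e. if H is harmonic and H = Q·A for some polynomial A, then H = 0. -/

import Mathlib

open MvPolynomial

/- Variable convention: `0 ↔ p₀₁, 1 ↔ p₀₂, 2 ↔ p₀₃, 3 ↔ p₁₂, 4 ↔ p₁₃, 5 ↔ p₂₃`. -/

/-- The Plücker quadric (Pfaffian) `Q = p₀₁p₂₃ − p₀₂p₁₃ + p₀₃p₁₂`. -/
noncomputable def Qp : MvPolynomial (Fin 6) ℂ := X 0 * X 5 - X 1 * X 4 + X 2 * X 3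

/-- The Laplace operator `Δ = ∂²/∂p₀₁∂p₂₃ − ∂²/∂p₀₂∂p₁₃ + ∂²/∂p₀₃∂p₁₂`. -/
noncomputable def lap (F : MvPolynomial (Fin 6) ℂ) : MvPolynomial (Fin 6) ℂ :=
  pderiv 5 (pderiv 0 F) - pderiv 4 (pderiv 1 F) + pderiv 3 (pderiv 2 F)

/-- The Cayley bracket `{F,G} = ⟨∇F, ∇G⟩`, the symmetric pairing of gradients
via the Pfaffian form. -/
noncomputable def cbrk (F G : MvPolynomial (Fin 6) ℂ) : MvPolynomial (Fin 6) ℂ :=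
  pderiv 0 F * pderiv 5 G + pderiv 5 F * pderiv 0 G
  - pderiv 1 F * pderiv 4 G - pderiv 4 F * pderiv 1 G
  + pderiv 2 F * pderiv 3 G + pderiv 3 F * pderiv 2 G

lemma aux_X_mul_pderiv_monomial (i : Fin 6) (d : Fin 6 →₀ ℕ) (a : ℂ) :
    X i * pderiv i (monomial d a) = monomial d (a * d i) := by
  rw [pderiv_monomial]
  rcases Nat.eq_zero_or_pos (d i) with h | h
  · simp [h]
  · have hd : Finsupp.single i 1 + (d - Finsupp.single i 1) = d := by
      ext j
      rcases eq_or_ne j i with rfl | hj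
      · simp [Finsupp.single_apply]; omega
      · simp [Finsupp.single_apply, hj, (Ne.symm hj), Finsupp.tsub_apply]
    rw [X, monomial_mul, one_mul, hd]

lemma euler6 {n : ℕ} {B : MvPolynomial (Fin 6) ℂ} (hB : B.IsHomogeneous n) :
    ∑ i : Fin 6, X i * pderiv i B = C (n : ℂ) * B := by
  have step : ∀ i : Fin 6, X i * pderiv i B
      = ∑ d ∈ B.support, X i * pderiv i (monomial d (coeff d B)) := by
    intro i
    conv_lhs => rw [B.as_sum]
    rw [map_sum, Finset.mul_sum]
  simp_rw [step]
  rw [Finset.sum_comm]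
  conv_rhs => rw [B.as_sum, Finset.mul_sum]
  refine Finset.sum_congr rfl fun d hd => ?_
  rw [MvPolynomial.mem_support_iff] at hd
  have hn : ∑ i : Fin 6, d i = n := by
    have := hB hd
    have : Finsupp.degree d = n := by rw [Finsupp.degree_eq_weight_one]; exact this
    rw [← this, Finsupp.degree]
    exact (Finset.sum_subset (Finset.subset_univ _)
      (fun x _ hx => Finsupp.notMem_support_iff.mp hx)).symm
  simp_rw [aux_X_mul_pderiv_monomial]
  rw [C_mul_monomial, ← map_sum (monomial d), ← Finset.mul_sum]
  congr 1
  rw [← Nat.cast_sum, hn, mul_comm]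

lemma lap_mul (F G : MvPolynomial (Fin 6) ℂ) :
    lap (F * G) = lap F * G + F * lap G + cbrk F G := by
  simp only [lap, cbrk, pderiv_mul, map_add, map_sub]
  ring

lemma lap_Qp : lap Qp = C 3 := by
  rw [map_ofNat C 3]
  simp (config := { decide := true }) [lap, Qp, pderiv_X, Pi.single_apply]
  norm_num

lemma cbrk_Qp (B : MvPolynomial (Fin 6) ℂ) :
    cbrk Qp B = ∑ i : Fin 6, X i * pderiv i B := by
  rw [Fin.sum_univ_six]
  simp only [cbrk, Qp, map_sub, map_add, pderiv_mul, pderiv_X]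
  simp (config := { decide := true }) [Pi.single_apply]
  ring

lemma Qp_ne_zero : Qp ≠ 0 := by
  intro h
  have := congrArg (eval (fun i : Fin 6 => if i.val = 0 ∨ i.val = 5 then (1:ℂ) else 0)) h
  norm_num [Qp] at this
  simp (config := { decide := true }) at this

lemma Qp_hom : Qp.IsHomogeneous 2 := by
  have h1 : ((X 0 * X 5 : MvPolynomial (Fin 6) ℂ)).IsHomogeneous 2 :=
    (isHomogeneous_X _ _).mul (isHomogeneous_X _ _)
  have h2 : ((X 1 * X 4 : MvPolynomial (Fin 6) ℂ)).IsHomogeneous 2 :=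
    (isHomogeneous_X _ _).mul (isHomogeneous_X _ _)
  have h3 : ((X 2 * X 3 : MvPolynomial (Fin 6) ℂ)).IsHomogeneous 2 :=
    (isHomogeneous_X _ _).mul (isHomogeneous_X _ _)
  exact (h1.sub h2).add h3

lemma comp_mul (A : MvPolynomial (Fin 6) ℂ) (j : ℕ) :
    homogeneousComponent j (Qp * A)
      = if 2 ≤ j then Qp * homogeneousComponent (j - 2) A else 0 := by
  set N := max (A.totalDegree + 1) (j + 1) with hN
  have hA : A = ∑ i ∈ Finset.range N, homogeneousComponent i A := by
    conv_lhs => rw [← sum_homogeneousComponent A]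
    apply Finset.sum_subset (Finset.range_subset_range.mpr (le_max_left _ _))
    intro x _ hx
    exact homogeneousComponent_eq_zero x A (by simpa using Finset.mem_range.not.mp hx)
  have expand : Qp * A = ∑ i ∈ Finset.range N, Qp * homogeneousComponent i A := by
    rw [← Finset.mul_sum (Finset.range N) (fun i => homogeneousComponent i A) Qp, ← hA]
  rw [expand, map_sum (homogeneousComponent j) (fun i => Qp * homogeneousComponent i A) (Finset.range N)]
  have hterm : ∀ i ∈ Finset.range N,
      homogeneousComponent j (Qp * homogeneousComponent i A)
        = if j = 2 + i then Qp * homogeneousComponent i A else 0 := by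
    intro i _
    exact homogeneousComponent_of_mem
      ((mem_homogeneousSubmodule _ _).mpr (Qp_hom.mul (homogeneousComponent_isHomogeneous i A)))
  rw [Finset.sum_congr rfl hterm]
  by_cases hj : 2 ≤ j
  · rw [if_pos hj, Finset.sum_eq_single (j - 2)]
    · rw [if_pos (by omega)]
    · intro i _ hi; rw [if_neg (by omega)]
    · intro h; exact absurd (Finset.mem_range.mpr (by omega)) h
  · rw [if_neg hj]
    exact Finset.sum_eq_zero fun i _ => if_neg (by omega)

lemma key : ∀ m : ℕ, ∀ H : MvPolynomial (Fin 6) ℂ, H.IsHomogeneous m →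
    ∀ r : ℝ, r ≤ 0 → Qp * lap H = C (r : ℂ) * H → (∃ A, H = Qp * A) → H = 0 := by
  intro m
  induction m using Nat.strong_induction_on with
  | _ m IH =>
  rintro H hH r hr hlap ⟨A, hA⟩
  have hcomp : homogeneousComponent m H = H := by
    have := homogeneousComponent_of_mem (m := m) (n := m) ((mem_homogeneousSubmodule m H).mpr hH)
    rwa [if_pos rfl] at this
  by_cases h2 : 2 ≤ m
  · set n := m - 2 with hn
    set B := homogeneousComponent n A with hB
    have hHB : H = Qp * B := by
      conv_lhs => rw [← hcomp, hA]
      rw [comp_mul, if_pos h2]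
    have hBhom : B.IsHomogeneous n := homogeneousComponent_isHomogeneous n A
    have hlapH : lap H = C 3 * B + Qp * lap B + C (n : ℂ) * B := by
      rw [hHB, lap_mul, lap_Qp, cbrk_Qp, euler6 hBhom]
    have hcancel : C 3 * B + Qp * lap B + C (n : ℂ) * B = C (r : ℂ) * B := by
      apply mul_left_cancel₀ Qp_ne_zero
      rw [← mul_assoc, mul_comm Qp (C (r:ℂ)), mul_assoc, ← hHB, ← hlap, hlapH]
    set r' : ℝ := r - 3 - n with hr'
    have hr'le : r' ≤ 0 := by
      have : (0:ℝ) ≤ n := Nat.cast_nonneg n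
      simp only [hr']; linarith
    have hr'ne : ((r' : ℝ) : ℂ) ≠ 0 := by
      have : r' < 0 := by
        have : (0:ℝ) ≤ n := Nat.cast_nonneg n
        simp only [hr']; linarith
      exact_mod_cast ne_of_lt (by exact_mod_cast this)
    have hQB : Qp * lap B = C ((r' : ℝ) : ℂ) * B := by
      have hcast : ((r' : ℝ) : ℂ) = (r : ℂ) - 3 - (n : ℂ) := by rw [hr']; push_cast; ring
      rw [hcast, map_sub, map_sub]
      have : Qp * lap B = C (r:ℂ) * B - C 3 * B - C (n:ℂ) * B := by
        rw [← hcancel]; ring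
      rw [this]; ring
    have hBdiv : B = Qp * (C (((r' : ℝ) : ℂ))⁻¹ * lap B) := by
      calc B = C (((r':ℝ):ℂ))⁻¹ * (C ((r':ℝ):ℂ) * B) := by
              rw [← mul_assoc, ← C_mul, inv_mul_cancel₀ hr'ne, C_1, one_mul]
        _ = C (((r':ℝ):ℂ))⁻¹ * (Qp * lap B) := by rw [← hQB]
        _ = Qp * (C (((r':ℝ):ℂ))⁻¹ * lap B) := by ring
    have hB0 : B = 0 := IH n (by omega) B hBhom r' hr'le hQB ⟨_, hBdiv⟩
    rw [hHB, hB0, mul_zero]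
  · rw [← hcomp, hA, comp_mul, if_neg h2]

/-- no nonzero harmonic homogeneous polynomial lies in the ideal
generated by `Q`: if `H` is harmonic homogeneous of degree `m` and `H = Q·A`,
then `H = 0`. -/
theorem stmt8 (m : ℕ) (H A : MvPolynomial (Fin 6) ℂ)
    (hH : H.IsHomogeneous m) (hharm : lap H = 0) (hdiv : H = Qp * A) :
    H = 0 := by
  apply key m H hH 0 le_rfl _ ⟨A, hdiv⟩
  rw [hharm, mul_zero]
  norm_num
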